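/- For every centrally symmetric convex body C in the plane ℝ² (C = −C) and every finite family F of positive homothets of C, τ(F) ≤ 7 · ν(F). -/

import Mathlib

open Pointwise Set

local notation "E2" => EuclideanSpace ℝ (Fin 2)

private lemma combo2 {C : Set E2} (hC : Convex ℝ C) (h0 : (0:E2) ∈ C) {x y : E2}
    (hx : x ∈ C) (hy : y ∈ C) {p q : ℝ} (hp : 0 ≤ p) (hq : 0 ≤ q) (hpq : p + q ≤ 1) :
    p • x + q • y ∈ C := by
  have := hC.sum_mem (t := (Finset.univ : Finset (Fin 3)))
    (w := ![p, q, 1 - p - q]) (z := ![x, y, 0]) ?_ ?_ ?_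
  · simpa [Fin.sum_univ_three] using this
  · intro i _; fin_cases i <;> simp <;> linarith
  · simp [Fin.sum_univ_three]; try ring
  · intro i _; fin_cases i <;> simpa

private lemma combo3 {C : Set E2} (hC : Convex ℝ C) (h0 : (0:E2) ∈ C) {x y z : E2}
    (hx : x ∈ C) (hy : y ∈ C) (hz : z ∈ C) {p q r : ℝ} (hp : 0 ≤ p) (hq : 0 ≤ q)
    (hr : 0 ≤ r) (hpq : p + q + r ≤ 1) :
    p • x + q • y + r • z ∈ C := by
  have := hC.sum_mem (t := (Finset.univ : Finset (Fin 4)))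
    (w := ![p, q, r, 1 - p - q - r]) (z := ![x, y, z, 0]) ?_ ?_ ?_
  · simpa [Fin.sum_univ_four, add_assoc] using this
  · intro i _; fin_cases i <;> simp <;> linarith
  · simp [Fin.sum_univ_four]; try ring
  · intro i _; fin_cases i <;> simpa

private lemma negmem {C : Set E2} (hCsymm : C = -C) {x : E2} (hx : x ∈ C) : -x ∈ C := by
  rw [hCsymm]; exact Set.neg_mem_neg.2 hx

private lemma hexmem {C : Set E2} (hC : Convex ℝ C) (hCsymm : C = -C) (h0 : (0:E2) ∈ C)
    {a b : E2} (ha : a ∈ C) (hb : b ∈ C) (hba : b - a ∈ C) {p q : ℝ}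
    (hp : |p| ≤ 1) (hq : |q| ≤ 1) (hpq : |p + q| ≤ 1) :
    p • a + q • b ∈ C := by
  have hna : -a ∈ C := negmem hCsymm ha
  have hnb : -b ∈ C := negmem hCsymm hb
  have hab : a - b ∈ C := by have := negmem hCsymm hba; simpa using this
  rw [abs_le] at hp hq hpq
  rcases le_total 0 p with h1 | h1 <;> rcases le_total 0 q with h2 | h2
  · exact combo2 hC h0 ha hb h1 h2 hpq.2
  · rcases le_total 0 (p + q) with h3 | h3
    · have : p • a + q • b = (p + q) • a + (-q) • (a - b) := by module
      rw [this]
      exact combo2 hC h0 ha hab h3 (by linarith) (by linarith)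
    · have : p • a + q • b = (-(p + q)) • (-b) + p • (a - b) := by module
      rw [this]
      exact combo2 hC h0 hnb hab (by linarith) h1 (by linarith)
  · rcases le_total 0 (p + q) with h3 | h3
    · have : p • a + q • b = (p + q) • b + (-p) • (b - a) := by module
      rw [this]
      exact combo2 hC h0 hb hba h3 (by linarith) (by linarith)
    · have : p • a + q • b = (-(p + q)) • (-a) + q • (b - a) := by module
      rw [this]
      exact combo2 hC h0 hna hba (by linarith) h2 (by linarith)
  · have : p • a + q • b = (-p) • (-a) + (-q) • (-b) := by module
    rw [this]
    exact combo2 hC h0 hna hnb (by linarith) (by linarith) (by linarith)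

private lemma support_exists {C : Set E2} (hC : Convex ℝ C) (h0int : (0:E2) ∈ interior C)
    {a : E2} (hnia : a ∉ interior C) :
    ∃ f : E2 →L[ℝ] ℝ, f a = 1 ∧ ∀ x ∈ C, f x ≤ 1 := by
  obtain ⟨f, hf⟩ := geometric_hahn_banach_open_point (hC.interior) isOpen_interior hnia
  have hfa0 : 0 < f a := by have := hf 0 h0int; simpa using this
  have hle : ∀ x ∈ C, f x ≤ f a := by
    intro x hx
    by_contra hcon
    push_neg at hcon
    have hfx : 0 < f x := lt_trans hfa0 hcon
    set t : ℝ := (f a + f x) / (2 * f x) with ht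
    have ht0 : 0 < t := by positivity
    have ht1 : t < 1 := by rw [div_lt_one (by positivity)]; linarith
    have hmem : t • x ∈ interior C := by
      have := hC.combo_self_interior_mem_interior (x := x) (y := 0) hx h0int
        (a := t) (b := 1 - t) (le_of_lt ht0) (by linarith) (by ring)
      simpa using this
    have := hf _ hmem
    rw [map_smul] at this
    have h2 : t * f x < f a := this
    have h3 : t * f x = (f a + f x) / 2 := by rw [ht]; field_simp
    linarith
  refine ⟨(f a)⁻¹ • f, by simp [inv_mul_cancel₀ (ne_of_gt hfa0)], fun x hx => ?_⟩
  have := hle x hx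
  simp only [ContinuousLinearMap.smul_apply, smul_eq_mul]
  rw [inv_mul_le_iff₀ hfa0]
  linarith

private lemma pair_lemma {C : Set E2} (hC : Convex ℝ C) (hCsymm : C = -C) (h0 : (0:E2) ∈ C)
    {a b : E2} (ha : a ∈ C) (hb : b ∈ C) (hba : b - a ∈ C)
    (fa : E2 →L[ℝ] ℝ) (hfa1 : fa a = 1) (hfa : ∀ x ∈ C, fa x ≤ 1)
    (fb : E2 →L[ℝ] ℝ) (hfb1 : fb b = 1) (hfb : ∀ x ∈ C, fb x ≤ 1)
    {y : E2} {α β : ℝ} (hy : y = α • a + β • b) (hα : 0 ≤ α) (hβ : 0 ≤ β) (hyC : y ∈ C) :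
    (2:ℝ) • y ∈ C ∨ (2:ℝ) • y - (a + b) ∈ C := by
  have hab : a - b ∈ C := by have := negmem hCsymm hba; simpa using this
  -- fa b ≥ 0 and fb a ≥ 0
  have hfab : 0 ≤ fa b := by have := hfa _ hab; simp only [map_sub] at this; linarith
  have hfba : 0 ≤ fb a := by have := hfb _ hba; simp only [map_sub] at this; linarith
  have hα1 : α ≤ 1 := by
    have := hfa _ hyC
    rw [hy] at this
    simp only [map_add, map_smul, smul_eq_mul, hfa1] at this
    nlinarith
  have hβ1 : β ≤ 1 := by
    have := hfb _ hyC
    rw [hy] at this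
    simp only [map_add, map_smul, smul_eq_mul, hfb1] at this
    nlinarith
  rcases le_total (α + β) (1/2 : ℝ) with hs | hs
  · left
    have h2y : (2:ℝ) • y = (2*α) • a + (2*β) • b := by rw [hy]; module
    rw [h2y]
    exact combo2 hC h0 ha hb (by linarith) (by linarith) (by linarith)
  · right
    rcases le_total (α + β) (3/2 : ℝ) with hs2 | hs2
    · have h2y : (2:ℝ) • y - (a + b) = (2*α - 1) • a + (2*β - 1) • b := by rw [hy]; module
      rw [h2y]
      exact hexmem hC hCsymm h0 ha hb hba (by rw [abs_le]; constructor <;> linarith)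
        (by rw [abs_le]; constructor <;> linarith) (by rw [abs_le]; constructor <;> linarith)
    · set d : ℝ := α + β - 1 with hd
      have hd0 : (0:ℝ) < d := by rw [hd]; linarith
      have key : (2:ℝ) • y - (a + b) =
          ((2*d - 1)/d) • y + ((1 - β)/d) • a + ((1 - α)/d) • b := by
        rw [hy]
        match_scalars <;> field_simp <;> rw [hd] <;> ring
      rw [key]
      have hsum : (2*d - 1)/d + (1 - β)/d + (1 - α)/d = 1 := by
        field_simp
        rw [hd]; ring
      exact combo3 hC h0 hyC ha hb
        (div_nonneg (by rw [hd]; linarith) hd0.le)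
        (div_nonneg (by linarith) hd0.le)
        (div_nonneg (by linarith) hd0.le) hsum.le

private lemma hexagon_exists {C : Set E2} (hCcompact : IsCompact C) (hCconv : Convex ℝ C)
    (hCsymm : C = -C) (h0int : (0:E2) ∈ interior C) :
    ∃ u w : E2,
      u ∈ C ∧ w ∈ C ∧ w - u ∈ C ∧
      u ∉ interior C ∧ w ∉ interior C ∧ w - u ∉ interior C ∧
      (∀ y : E2, ∃ c₁ c₂ : ℝ, 0 ≤ c₂ ∧ (y = c₁ • u + c₂ • w ∨ -y = c₁ • u + c₂ • w)) := by
  classical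
  have hnhds : C ∈ nhds (0:E2) := mem_interior_iff_mem_nhds.1 h0int
  have habs : Absorbent ℝ C := absorbent_nhds_zero hnhds
  have hbdd : Bornology.IsVonNBounded ℝ C :=
    (NormedSpace.isVonNBounded_iff ℝ).2 hCcompact.isBounded
  set g : E2 → ℝ := gauge C with hg
  have hsymm' : ∀ x ∈ C, -x ∈ C := fun x hx => negmem hCsymm hx
  have hgneg : ∀ x : E2, g (-x) = g x := fun x => gauge_neg hsymm' x
  have hmem_iff : ∀ x : E2, x ∈ C ↔ g x ≤ 1 := by
    intro x
    rw [hg, gauge_le_one_iff_mem_closure hCconv hnhds, hCcompact.isClosed.closure_eq]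
  have hint_iff : ∀ x : E2, x ∈ interior C ↔ g x < 1 := by
    intro x; rw [hg, gauge_lt_one_iff_mem_interior hCconv hnhds]
  have hgpos : ∀ x : E2, x ≠ 0 → 0 < g x := fun x hx => (gauge_pos habs hbdd).2 hx
  have hgcont : Continuous g := continuous_gauge hCconv hnhds
  set e0 : E2 := EuclideanSpace.single (0 : Fin 2) (1:ℝ) with he0
  set e1 : E2 := EuclideanSpace.single (1 : Fin 2) (1:ℝ) with he1
  have he0ne : e0 ≠ 0 := by
    intro h
    have := congrArg (fun v : E2 => v 0) h
    simp [he0, EuclideanSpace.single_apply] at this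
  have hge0 : 0 < g e0 := hgpos _ he0ne
  set u : E2 := (g e0)⁻¹ • e0 with hu
  have hgu : g u = 1 := by
    rw [hu, hg, gauge_smul_of_nonneg (inv_nonneg.2 hge0.le)]
    simp [smul_eq_mul, inv_mul_cancel₀ (ne_of_gt hge0)]
    exact inv_mul_cancel₀ (ne_of_gt hge0)
  have hu0 : u 0 = (g e0)⁻¹ := by
    simp [hu, he0, EuclideanSpace.single_apply]
  have hu1 : u 1 = 0 := by
    simp [hu, he0, EuclideanSpace.single_apply]
  have hu0pos : 0 < u 0 := by rw [hu0]; positivity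
  -- the path of directions
  set d : ℝ → E2 := fun t => Real.cos (Real.pi * t) • u + Real.sin (Real.pi * t) • e1 with hd
  have hd0 : ∀ t, (d t) 0 = Real.cos (Real.pi * t) * u 0 := by
    intro t; simp [hd, he1, EuclideanSpace.single_apply]
  have hd1 : ∀ t, (d t) 1 = Real.sin (Real.pi * t) := by
    intro t; simp [hd, hu1, he1, EuclideanSpace.single_apply]
  have hdne : ∀ t, d t ≠ 0 := by
    intro t h
    have h0 : Real.cos (Real.pi * t) * u 0 = 0 := by
      rw [← hd0 t, h]; rfl
    have h1 : Real.sin (Real.pi * t) = 0 := by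
      rw [← hd1 t, h]; rfl
    have hcos : Real.cos (Real.pi * t) = 0 := by
      rcases mul_eq_zero.1 h0 with h | h
      · exact h
      · exact absurd h (ne_of_gt hu0pos)
    have := Real.sin_sq_add_cos_sq (Real.pi * t)
    rw [h1, hcos] at this
    norm_num at this
  set r : ℝ → E2 := fun t => (g (d t))⁻¹ • d t with hr
  have hgr : ∀ t, g (r t) = 1 := by
    intro t
    rw [hr, hg, gauge_smul_of_nonneg (inv_nonneg.2 (hgpos _ (hdne t)).le)]
    simp [smul_eq_mul, inv_mul_cancel₀ (ne_of_gt (hgpos _ (hdne t)))]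
    exact inv_mul_cancel₀ (ne_of_gt (hgpos _ (hdne t)))
  set φ : ℝ → ℝ := fun t => g (r t - u) with hφ
  have hdcont : Continuous d := by
    apply Continuous.add
    · exact ((Real.continuous_cos.comp (continuous_const.mul continuous_id))).smul continuous_const
    · exact ((Real.continuous_sin.comp (continuous_const.mul continuous_id))).smul continuous_const
  have hrcont : Continuous r := by
    refine Continuous.smul (f := fun t => (g (d t))⁻¹) (g := d) ?_ ?_
    · exact ((hgcont.comp hdcont).inv₀ (fun t => ne_of_gt (hgpos _ (hdne t))))
    · exact hdcont
  have hφcont : Continuous φ := hgcont.comp (hrcont.sub continuous_const)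
  have hφ0 : φ 0 = 0 := by
    have : d 0 = u := by rw [hd]; simp
    simp only [hφ, hr, this, hgu]
    simp [hg]
  have hφ1 : φ 1 = 2 := by
    have hd1u : d 1 = -u := by rw [hd]; simp [Real.cos_pi, Real.sin_pi]
    have : r 1 = -u := by rw [hr]; simp [hd1u, hgneg, hgu]
    show g (r 1 - u) = 2
    rw [this]
    have h2 : -u - u = -((2:ℝ) • u) := by module
    rw [h2, hgneg, hg, gauge_smul_of_nonneg (by norm_num : (0:ℝ) ≤ 2)]
    simp [smul_eq_mul, ← hg, hgu]
  obtain ⟨t₀, ht₀mem, ht₀⟩ : ∃ t₀ ∈ Set.Icc (0:ℝ) 1, φ t₀ = 1 := by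
    have := intermediate_value_Icc (by norm_num : (0:ℝ) ≤ 1) hφcont.continuousOn
    rw [hφ0, hφ1] at this
    have h1 : (1:ℝ) ∈ Set.Icc (0:ℝ) 2 := by norm_num
    obtain ⟨t₀, ht₀mem, ht₀⟩ := this h1
    exact ⟨t₀, ht₀mem, ht₀⟩
  have ht₀0 : t₀ ≠ 0 := by intro h; rw [h, hφ0] at ht₀; norm_num at ht₀
  have ht₀1 : t₀ ≠ 1 := by intro h; rw [h, hφ1] at ht₀; norm_num at ht₀
  have ht₀pos : 0 < t₀ := lt_of_le_of_ne ht₀mem.1 (Ne.symm ht₀0)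
  have ht₀lt : t₀ < 1 := lt_of_le_of_ne ht₀mem.2 ht₀1
  have hsinpos : 0 < Real.sin (Real.pi * t₀) :=
    Real.sin_pos_of_pos_of_lt_pi (by positivity)
      (by nlinarith [Real.pi_pos])
  set w : E2 := r t₀ with hw
  have hgw : g w = 1 := hgr t₀
  have hgwu : g (w - u) = 1 := ht₀
  have hw1pos : 0 < w 1 := by
    have : w 1 = (g (d t₀))⁻¹ * Real.sin (Real.pi * t₀) := by
      simp [hw, hr, hd1 t₀, smul_eq_mul]
    rw [this]
    exact mul_pos (inv_pos.2 (hgpos _ (hdne t₀))) hsinpos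
  refine ⟨u, w, (hmem_iff u).2 hgu.le, (hmem_iff w).2 hgw.le, (hmem_iff _).2 hgwu.le,
    ?_, ?_, ?_, ?_⟩
  · rw [hint_iff]; rw [hgu]; norm_num
  · rw [hint_iff]; rw [hgw]; norm_num
  · rw [hint_iff]; rw [hgwu]; norm_num
  · -- decomposition
    have key : ∀ y : E2, 0 ≤ y 1 → ∃ c₁ c₂ : ℝ, 0 ≤ c₂ ∧ y = c₁ • u + c₂ • w := by
      intro y hy1
      refine ⟨(y 0 - (y 1 / w 1) * w 0) / u 0, y 1 / w 1, div_nonneg hy1 hw1pos.le, ?_⟩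
      ext i
      have hcoord : ∀ j : Fin 2,
          (((y 0 - (y 1 / w 1) * w 0) / u 0) • u + (y 1 / w 1) • w) j
          = ((y 0 - (y 1 / w 1) * w 0) / u 0) * u j + (y 1 / w 1) * w j := by
        intro j; simp [PiLp.add_apply, PiLp.smul_apply, smul_eq_mul]
      revert i
      rw [Fin.forall_fin_two]
      constructor
      · rw [hcoord 0]
        field_simp
        ring
      · rw [hcoord 1, hu1]
        field_simp
        ring
    intro y
    rcases le_total 0 (y 1) with h | h
    · obtain ⟨c₁, c₂, hc₂, heq⟩ := key y h
      exact ⟨c₁, c₂, hc₂, Or.inl heq⟩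
    · obtain ⟨c₁, c₂, hc₂, heq⟩ := key (-y) (by simpa using neg_nonneg.2 h)
      exact ⟨c₁, c₂, hc₂, Or.inr heq⟩

private lemma cover_lemma {C : Set E2} (hCcompact : IsCompact C) (hCconv : Convex ℝ C)
    (hCsymm : C = -C) (h0int : (0:E2) ∈ interior C) :
    ∃ P₀ : Finset E2, P₀.card ≤ 7 ∧ ∀ z ∈ C, ∃ p ∈ P₀, (2:ℝ) • z - p ∈ C := by
  classical
  have h0 : (0:E2) ∈ C := interior_subset h0int
  obtain ⟨u, w, huC, hwC, hwuC, huI, hwI, hwuI, hdec⟩ :=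
    hexagon_exists hCcompact hCconv hCsymm h0int
  have hnegint0 : ∀ x : E2, -x ∈ interior C → x ∈ interior C := by
    intro x hx
    have h1 := (Homeomorph.neg E2).preimage_interior C
    have h2 : (Homeomorph.neg E2) ⁻¹' C = -C := by
      ext y; simp [Set.mem_neg]
    rw [h2] at h1
    rw [hCsymm, ← h1]
    show (Homeomorph.neg E2) x ∈ interior C
    simpa using hx
  have hnegint : ∀ x : E2, x ∉ interior C → -x ∉ interior C :=
    fun x hx hmem => hx (hnegint0 x hmem)
  obtain ⟨fu, hfu1, hfu⟩ := support_exists hCconv h0int huI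
  obtain ⟨fw, hfw1, hfw⟩ := support_exists hCconv h0int hwI
  obtain ⟨fwu, hfwu1, hfwu⟩ := support_exists hCconv h0int hwuI
  -- support at -u
  have hnu1 : (-fu) (-u) = 1 := by simp [hfu1]
  have hnu : ∀ x ∈ C, (-fu) x ≤ 1 := by
    intro x hx
    have : fu (-x) ≤ 1 := hfu _ (negmem hCsymm hx)
    simpa using this
  have hnuC : -u ∈ C := negmem hCsymm huC
  set P₀ : Finset E2 :=
    {0, u + w, -(u + w), w + (w - u), -(w + (w - u)), (w - u) + -u, -((w - u) + -u)} with hP₀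
  have h7 : P₀.card ≤ 7 :=
    (Finset.card_insert_le _ _).trans (Nat.add_le_add_right
      ((Finset.card_insert_le _ _).trans (Nat.add_le_add_right
        ((Finset.card_insert_le _ _).trans (Nat.add_le_add_right
          ((Finset.card_insert_le _ _).trans (Nat.add_le_add_right
            ((Finset.card_insert_le _ _).trans (Nat.add_le_add_right
              ((Finset.card_insert_le _ _).trans (Nat.add_le_add_right
                (le_of_eq (Finset.card_singleton _)) 1)) 1)) 1)) 1)) 1)) 1)
  have hnegP₀ : ∀ p ∈ P₀, -p ∈ P₀ := by
    intro p hp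
    simp only [hP₀, Finset.mem_insert, Finset.mem_singleton] at hp ⊢
    rcases hp with rfl | rfl | rfl | rfl | rfl | rfl | rfl <;> simp
  have main : ∀ z ∈ C, ∀ c₁ c₂ : ℝ, 0 ≤ c₂ → z = c₁ • u + c₂ • w →
      ∃ p ∈ P₀, (2:ℝ) • z - p ∈ C := by
    intro z hz c₁ c₂ hc₂ hzeq
    have h0P : (0:E2) ∈ P₀ := by simp [hP₀]
    rcases le_total 0 c₁ with hc₁ | hc₁
    · -- pair (u, w)
      rcases pair_lemma hCconv hCsymm h0 huC hwC hwuC fu hfu1 hfu fw hfw1 hfw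
        hzeq hc₁ hc₂ hz with h | h
      · exact ⟨0, h0P, by simpa using h⟩
      · exact ⟨u + w, by simp [hP₀], h⟩
    · rcases le_total 0 (c₁ + c₂) with hc₁₂ | hc₁₂
      · -- pair (w, w - u)
        have hzeq' : z = (c₁ + c₂) • w + (-c₁) • (w - u) := by rw [hzeq]; module
        have hba : (w - u) - w ∈ C := by
          have : (w - u) - w = -u := by module
          rw [this]; exact hnuC
        rcases pair_lemma hCconv hCsymm h0 hwC hwuC hba fw hfw1 hfw fwu hfwu1 hfwu
          hzeq' hc₁₂ (by linarith) hz with h | h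
        · exact ⟨0, h0P, by simpa using h⟩
        · exact ⟨w + (w - u), by simp [hP₀], h⟩
      · -- pair (w - u, -u)
        have hzeq' : z = c₂ • (w - u) + (-(c₁ + c₂)) • (-u) := by rw [hzeq]; module
        have hba : -u - (w - u) ∈ C := by
          have : -u - (w - u) = -w := by module
          rw [this]; exact negmem hCsymm hwC
        rcases pair_lemma hCconv hCsymm h0 hwuC hnuC hba fwu hfwu1 hfwu (-fu) hnu1 hnu
          hzeq' hc₂ (by linarith) hz with h | h
        · exact ⟨0, h0P, by simpa using h⟩
        · exact ⟨(w - u) + -u, by simp [hP₀], h⟩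
  refine ⟨P₀, h7, fun z hz => ?_⟩
  obtain ⟨c₁, c₂, hc₂, heq | heq⟩ := hdec z
  · exact main z hz c₁ c₂ hc₂ heq
  · obtain ⟨p, hp, hmem⟩ := main (-z) (negmem hCsymm hz) c₁ c₂ hc₂ heq
    refine ⟨-p, hnegP₀ p hp, ?_⟩
    have : (2:ℝ) • z - -p = -((2:ℝ) • (-z) - p) := by module
    rw [this]
    exact negmem hCsymm hmem

private lemma pierce_lemma {C : Set E2} (hCconv : Convex ℝ C) (hCsymm : C = -C)
    (h0 : (0:E2) ∈ C) {P₀ : Finset E2}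
    (hcover : ∀ z ∈ C, ∃ p ∈ P₀, (2:ℝ) • z - p ∈ C)
    {μ lam : ℝ} (hμ : 0 < μ) (hμlam : μ ≤ lam) {v₀ v : E2}
    (h : ¬ Disjoint (v +ᵥ lam • C) (v₀ +ᵥ μ • C)) :
    ∃ p ∈ P₀, v₀ + μ • p ∈ v +ᵥ lam • C := by
  have hlam : (0:ℝ) < lam := lt_of_lt_of_le hμ hμlam
  rw [Set.not_disjoint_iff] at h
  obtain ⟨x, hx1, hx2⟩ := h
  obtain ⟨b₁, hb₁, hxb₁⟩ := Set.mem_vadd_set.1 hx1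
  obtain ⟨c₁, hc₁, hcb₁⟩ := Set.mem_smul_set.1 hb₁
  obtain ⟨b₀, hb₀, hxb₀⟩ := Set.mem_vadd_set.1 hx2
  obtain ⟨c₀, hc₀, hcb₀⟩ := Set.mem_smul_set.1 hb₀
  have hx : v₀ + μ • c₀ = v + lam • c₁ := by
    rw [← hcb₀] at hxb₀
    rw [← hcb₁] at hxb₁
    rw [← hxb₁] at hxb₀
    simpa [vadd_eq_add] using hxb₀
  set z : E2 := (1/2 : ℝ) • c₀ + (1/2 : ℝ) • (-c₁) with hz
  have hzC : z ∈ C := combo2 hCconv h0 hc₀ (negmem hCsymm hc₁)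
    (by norm_num) (by norm_num) (by norm_num)
  obtain ⟨p, hp, hpe⟩ := hcover z hzC
  have hpe' : c₀ - c₁ - p ∈ C := by
    have heq : (2:ℝ) • z - p = c₀ - c₁ - p := by rw [hz]; module
    rwa [heq] at hpe
  set cc : E2 := ((lam - μ)/lam) • c₁ + (μ/lam) • (-(c₀ - c₁ - p)) with hcc
  have hccC : cc ∈ C := combo2 hCconv h0 hc₁ (negmem hCsymm hpe')
    (div_nonneg (by linarith) hlam.le) (div_nonneg hμ.le hlam.le)
    (by rw [← add_div, div_le_one hlam]; linarith)
  refine ⟨p, hp, ?_⟩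
  refine Set.mem_vadd_set.2 ⟨lam • cc, Set.smul_mem_smul_set hccC, ?_⟩
  have hv : v = v₀ + μ • c₀ - lam • c₁ := by
    rw [eq_sub_iff_add_eq]
    exact hx.symm
  rw [vadd_eq_add, hv, hcc]
  match_scalars <;> field_simp <;> ring

private lemma zero_mem_interior {C : Set E2} (hCconv : Convex ℝ C) (hCsymm : C = -C)
    (hCint : (interior C).Nonempty) : (0:E2) ∈ interior C := by
  obtain ⟨x₀, hx₀⟩ := hCint
  have hnx₀ : -x₀ ∈ interior C := by
    have h1 := (Homeomorph.neg E2).preimage_interior C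
    have h2 : (Homeomorph.neg E2) ⁻¹' C = -C := by ext y; simp [Set.mem_neg]
    rw [h2] at h1
    have : -x₀ ∈ interior (-C) := by
      rw [← h1]
      show (Homeomorph.neg E2) (-x₀) ∈ interior C
      simpa using hx₀
    rwa [← hCsymm] at this
  have := hCconv.interior hx₀ hnx₀ (by norm_num : (0:ℝ) ≤ 1/2)
    (by norm_num : (0:ℝ) ≤ 1/2) (by norm_num)
  have heq : (1/2 : ℝ) • x₀ + (1/2 : ℝ) • (-x₀) = (0:E2) := by module
  rwa [heq] at this

theorem piercing_homothets_symmetric_planar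
    (C : Set (EuclideanSpace ℝ (Fin 2)))
    (hCcompact : IsCompact C) (hCconv : Convex ℝ C)
    (hCint : (interior C).Nonempty) (hCsymm : C = -C)
    (S : Finset (ℝ × EuclideanSpace ℝ (Fin 2)))
    (hS : ∀ s ∈ S, 0 < s.1) :
    ∃ (P : Finset (EuclideanSpace ℝ (Fin 2))) (W : Finset (ℝ × EuclideanSpace ℝ (Fin 2))),
      W ⊆ S ∧
      (∀ s ∈ S, ∃ x ∈ P, x ∈ s.2 +ᵥ s.1 • C) ∧
      ((W : Set (ℝ × EuclideanSpace ℝ (Fin 2))).Pairwise fun s s' =>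
        Disjoint (s.2 +ᵥ s.1 • C) (s'.2 +ᵥ s'.1 • C)) ∧
      P.card ≤ 7 * W.card := by
  classical
  have h0int : (0:E2) ∈ interior C := zero_mem_interior hCconv hCsymm hCint
  have h0 : (0:E2) ∈ C := interior_subset h0int
  obtain ⟨P₀, hP₀card, hcover⟩ := cover_lemma hCcompact hCconv hCsymm h0int
  have key : ∀ (n : ℕ) (S : Finset (ℝ × E2)), S.card ≤ n → (∀ s ∈ S, 0 < s.1) →
      ∃ (P : Finset E2) (W : Finset (ℝ × E2)), W ⊆ S ∧
      (∀ s ∈ S, ∃ x ∈ P, x ∈ s.2 +ᵥ s.1 • C) ∧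
      ((W : Set (ℝ × E2)).Pairwise fun s s' =>
        Disjoint (s.2 +ᵥ s.1 • C) (s'.2 +ᵥ s'.1 • C)) ∧
      P.card ≤ 7 * W.card := by
    intro n
    induction n with
    | zero =>
      intro S hS0 _
      have : S = ∅ := Finset.card_eq_zero.1 (le_antisymm hS0 (Nat.zero_le _))
      subst this
      exact ⟨∅, ∅, by simp, by simp, by simp, by simp⟩
    | succ n ih =>
      intro S hcard hpos
      rcases S.eq_empty_or_nonempty with rfl | hne
      · exact ⟨∅, ∅, by simp, by simp, by simp, by simp⟩
      obtain ⟨s₀, hs₀S, hmin⟩ := S.exists_min_image Prod.fst hne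
      have hs₀pos := hpos s₀ hs₀S
      set T := S.filter (fun s => Disjoint (s.2 +ᵥ s.1 • C) (s₀.2 +ᵥ s₀.1 • C)) with hT
      have hTsub : T ⊆ S := Finset.filter_subset _ _
      have hs₀T : s₀ ∉ T := by
        intro hmem
        have hd := (Finset.mem_filter.1 hmem).2
        have hnon : (s₀.2 +ᵥ s₀.1 • C).Nonempty :=
          ⟨s₀.2 +ᵥ s₀.1 • (0:E2), Set.mem_vadd_set.2 ⟨s₀.1 • (0:E2), Set.smul_mem_smul_set h0, rfl⟩⟩
        exact hnon.ne_empty (by simpa [Set.bot_eq_empty] using disjoint_self.1 hd)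
      have hTcard : T.card ≤ n := by
        have : T.card < S.card := Finset.card_lt_card ⟨hTsub, fun hsub => hs₀T (hsub hs₀S)⟩
        omega
      obtain ⟨P', W', hW'T, hcov', hpair', hcard'⟩ := ih T hTcard (fun s hs => hpos s (hTsub hs))
      refine ⟨P' ∪ P₀.image (fun p => s₀.2 + s₀.1 • p), insert s₀ W', ?_, ?_, ?_, ?_⟩
      · exact Finset.insert_subset hs₀S (hW'T.trans hTsub)
      · intro s hsS
        by_cases hd : Disjoint (s.2 +ᵥ s.1 • C) (s₀.2 +ᵥ s₀.1 • C)
        · obtain ⟨x, hxP, hxmem⟩ := hcov' s (Finset.mem_filter.2 ⟨hsS, hd⟩)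
          exact ⟨x, Finset.mem_union_left _ hxP, hxmem⟩
        · obtain ⟨p, hp, hmem⟩ :=
            pierce_lemma hCconv hCsymm h0 hcover hs₀pos (hmin s hsS) hd
          exact ⟨s₀.2 + s₀.1 • p, Finset.mem_union_right _ (Finset.mem_image.2 ⟨p, hp, rfl⟩),
            hmem⟩
      · rw [Finset.coe_insert]
        haveI : Std.Symm (fun s s' : ℝ × E2 => Disjoint (s.2 +ᵥ s.1 • C) (s'.2 +ᵥ s'.1 • C)) :=
          ⟨fun a b h => h.symm⟩
        refine Set.pairwise_insert_of_symm.2 ⟨hpair', ?_⟩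
        intro b hb _
        have hbT : b ∈ T := hW'T hb
        exact ((Finset.mem_filter.1 hbT).2).symm
      · have h1 : (P' ∪ P₀.image (fun p => s₀.2 + s₀.1 • p)).card ≤ P'.card + 7 := by
          refine (Finset.card_union_le _ _).trans ?_
          have := (Finset.card_image_le (s := P₀) (f := fun p => s₀.2 + s₀.1 • p)).trans hP₀card
          omega
        have h2 : (insert s₀ W').card = W'.card + 1 :=
          Finset.card_insert_of_notMem (fun h => hs₀T (hW'T h))
        rw [h2]
        omega
  exact key S.card S le_rfl hS
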